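/- arXiv:2210.10082 — 2 statements merged into one kernel-verified Lean document; each statement's English description precedes it below -/
import Mathlib

section
/- With notation as above (g = x^2+y^2z+yz^2+xyz over a field of characteristic 2, X, Y, Z truncated series with lowest degrees p, q, r respectively), if l = 2p, l < 2q + r, and l < q + 2r, then the coefficient of t^l in g(X,Y,Z) equals x_p^2. -/
open Finset

/-- The variable `x_u` (resp. `y_v`, `z_w`) in `k[x_*, y_*, z_*]`. -/
noncomputable def xv (k : Type*) [Field k] (u : ℕ) : MvPolynomial (Fin 3 × ℕ) k :=
  MvPolynomial.X (0, u)

noncomputable def yv (k : Type*) [Field k] (v : ℕ) : MvPolynomial (Fin 3 × ℕ) k :=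
  MvPolynomial.X (1, v)

noncomputable def zv (k : Type*) [Field k] (w : ℕ) : MvPolynomial (Fin 3 × ℕ) k :=
  MvPolynomial.X (2, w)

/-- The truncated series `∑_{i=a}^m c_i t^i`. -/
noncomputable def truncSeries (k : Type*) [Field k]
    (c : ℕ → MvPolynomial (Fin 3 × ℕ) k) (a m : ℕ) :
    Polynomial (MvPolynomial (Fin 3 × ℕ) k) :=
  ∑ i ∈ Finset.Icc a m, Polynomial.C (c i) * Polynomial.X ^ i

/-- `g(X,Y,Z)` for `g = x^2 + y^2 z + y z^2 + x y z` and truncated series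
`X, Y, Z` with lowest orders `p, q, r`. -/
noncomputable def gSeries (k : Type*) [Field k] (p q r m : ℕ) :
    Polynomial (MvPolynomial (Fin 3 × ℕ) k) :=
  (truncSeries k (xv k) p m) ^ 2
    + (truncSeries k (yv k) q m) ^ 2 * truncSeries k (zv k) r m
    + truncSeries k (yv k) q m * (truncSeries k (zv k) r m) ^ 2
    + truncSeries k (xv k) p m * truncSeries k (yv k) q m * truncSeries k (zv k) r m


lemma coeff_trunc (k : Type*) [Field k] (c : ℕ → MvPolynomial (Fin 3 × ℕ) k) (a m n : ℕ) :
    (truncSeries k c a m).coeff n = if a ≤ n ∧ n ≤ m then c n else 0 := by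
  rw [truncSeries, Polynomial.finset_sum_coeff]
  simp only [Polynomial.coeff_C_mul, Polynomial.coeff_X_pow]
  simp only [mul_ite, mul_one, mul_zero]
  rw [Finset.sum_ite_eq (Icc a m) n c]
  simp [Finset.mem_Icc]

lemma coeff_trunc_lt (k : Type*) [Field k] (c : ℕ → MvPolynomial (Fin 3 × ℕ) k) {a m n : ℕ}
    (h : n < a) : (truncSeries k c a m).coeff n = 0 := by
  rw [coeff_trunc]; simp [not_le.2 h]

lemma coeff_mul_lowzero {R : Type*} [CommRing R] {P Q : Polynomial R} {a b : ℕ}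
    (hP : ∀ i < a, P.coeff i = 0) (hQ : ∀ j < b, Q.coeff j = 0) :
    ∀ n < a + b, (P * Q).coeff n = 0 := by
  intro n h
  rw [Polynomial.coeff_mul]
  apply Finset.sum_eq_zero
  intro p hp
  rw [Finset.HasAntidiagonal.mem_antidiagonal] at hp
  rcases lt_or_ge p.1 a with h1 | h1
  · rw [hP _ h1, zero_mul]
  · rw [hQ _ (by omega), mul_zero]

/-- Lemma 4.3(2): if `l = 2p`, `l < 2q + r` and `l < q + 2r`, then the coefficient
of `t^l` in `g(X,Y,Z)` equals `x_p^2`. -/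
theorem coeff_gSeries_eq_sq (k : Type*) [Field k] [CharP k 2] (m p q r l : ℕ)
    (hp : 1 ≤ p) (hq : 1 ≤ q) (hr : 1 ≤ r) (hl : l ≤ m)
    (h1 : l = 2 * p) (h2 : l < 2 * q + r) (h3 : l < q + 2 * r) :
    (gSeries k p q r m).coeff l = (xv k p) ^ 2 := by
  have hX : ∀ i < p, (truncSeries k (xv k) p m).coeff i = 0 := fun i hi => coeff_trunc_lt k _ hi
  have hY : ∀ i < q, (truncSeries k (yv k) q m).coeff i = 0 := fun i hi => coeff_trunc_lt k _ hi
  have hZ : ∀ i < r, (truncSeries k (zv k) r m).coeff i = 0 := fun i hi => coeff_trunc_lt k _ hi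
  have hY2 : ∀ i < 2 * q, ((truncSeries k (yv k) q m) ^ 2).coeff i = 0 := by
    intro i hi; rw [sq]; exact coeff_mul_lowzero hY hY i (by omega)
  have hZ2 : ∀ i < 2 * r, ((truncSeries k (zv k) r m) ^ 2).coeff i = 0 := by
    intro i hi; rw [sq]; exact coeff_mul_lowzero hZ hZ i (by omega)
  have hXY : ∀ i < p + q, (truncSeries k (xv k) p m * truncSeries k (yv k) q m).coeff i = 0 :=
    coeff_mul_lowzero hX hY
  have t2 : ((truncSeries k (yv k) q m) ^ 2 * truncSeries k (zv k) r m).coeff l = 0 :=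
    coeff_mul_lowzero hY2 hZ l h2
  have t3 : (truncSeries k (yv k) q m * (truncSeries k (zv k) r m) ^ 2).coeff l = 0 :=
    coeff_mul_lowzero hY hZ2 l h3
  have t4 : (truncSeries k (xv k) p m * truncSeries k (yv k) q m
      * truncSeries k (zv k) r m).coeff l = 0 :=
    coeff_mul_lowzero hXY hZ l (by omega)
  have t1 : ((truncSeries k (xv k) p m) ^ 2).coeff l = (xv k p) ^ 2 := by
    rw [sq, Polynomial.coeff_mul]
    rw [Finset.sum_eq_single (p, p)]
    · rw [coeff_trunc]
      simp only [le_refl, true_and]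
      rw [if_pos (by omega), sq]
    · intro b hb hne
      rw [Finset.HasAntidiagonal.mem_antidiagonal] at hb
      rcases lt_or_ge b.1 p with h1 | h1
      · rw [hX _ h1, zero_mul]
      · have : b.2 < p := by
          rcases lt_or_ge b.2 p with h' | h'
          · exact h'
          · exfalso; apply hne; have : b.1 = p := by omega
            have : b.2 = p := by omega
            exact Prod.ext (by omega) this
        rw [hX _ this, mul_zero]
    · intro h; exfalso; apply h; rw [Finset.HasAntidiagonal.mem_antidiagonal]; omega
  rw [gSeries, Polynomial.coeff_add, Polynomial.coeff_add, Polynomial.coeff_add,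
    t1, t2, t3, t4, add_zero, add_zero, add_zero]
end

section
/- Let k be a field of characteristic 2, f = x^2 + y^2*z + y*z^2, m >= 5, and define f^{(j)} in R_m as the t^j coefficient of f(sum x_i t^i, sum y_i t^i, sum z_i t^i) in R_m[t]/(t^{m+1}). Then modulo the ideal L = (x_0, x_1, x_2, y_0, y_1, z_0, z_1) one has f^{(j)} = 0 for all 0 <= j <= 5. -/
open Finset

/-- The series `∑_{i=0}^m c_i t^i`. -/
noncomputable def serUpTo (k : Type*) [Field k]
    (c : ℕ → MvPolynomial (Fin 3 × ℕ) k) (m : ℕ) :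
    Polynomial (MvPolynomial (Fin 3 × ℕ) k) :=
  ∑ i ∈ Finset.range (m + 1), Polynomial.C (c i) * Polynomial.X ^ i

/-- The coefficient polynomial `f^{(j)}`, where `f = x^2 + y^2 z + y z^2`:
the coefficient of `t^j` in `f(∑ x_i t^i, ∑ y_i t^i, ∑ z_i t^i)`. -/
noncomputable def fCoeff (k : Type*) [Field k] (m j : ℕ) :
    MvPolynomial (Fin 3 × ℕ) k :=
  ((serUpTo k (xv k) m) ^ 2
    + (serUpTo k (yv k) m) ^ 2 * serUpTo k (zv k) m
    + serUpTo k (yv k) m * (serUpTo k (zv k) m) ^ 2).coeff j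

/-- The coefficient polynomial `g^{(j)}`, where `g = x^2 + y^2 z + y z^2 + x y z`. -/
noncomputable def gCoeff (k : Type*) [Field k] (m j : ℕ) :
    MvPolynomial (Fin 3 × ℕ) k :=
  ((serUpTo k (xv k) m) ^ 2
    + (serUpTo k (yv k) m) ^ 2 * serUpTo k (zv k) m
    + serUpTo k (yv k) m * (serUpTo k (zv k) m) ^ 2
    + serUpTo k (xv k) m * serUpTo k (yv k) m * serUpTo k (zv k) m).coeff j

lemma serUpTo_coeff (k : Type*) [Field k] (c : ℕ → MvPolynomial (Fin 3 × ℕ) k)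
    (m d : ℕ) (hd : d ≤ m) : (serUpTo k c m).coeff d = c d := by
  unfold serUpTo
  rw [Polynomial.finset_sum_coeff]
  simp only [Polynomial.coeff_C_mul, Polynomial.coeff_X_pow, mul_ite, mul_one, mul_zero]
  rw [Finset.sum_ite_eq (Finset.range (m+1)) d c]
  simp [Nat.lt_succ_of_le hd]

/-- For `m ≥ 5`, modulo the ideal `L_{322} = (x_0, x_1, x_2, y_0, y_1, z_0, z_1)`
one has `f^{(j)} = 0` for all `0 ≤ j ≤ 5`. -/
theorem fCoeff_mem_L322 (k : Type*) [Field k] [CharP k 2] (m : ℕ) (hm : 5 ≤ m)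
    (j : ℕ) (hj : j ≤ 5) :
    fCoeff k m j ∈ Ideal.span
      {xv k 0, xv k 1, xv k 2, yv k 0, yv k 1, zv k 0, zv k 1} := by
  set I := Ideal.span {xv k 0, xv k 1, xv k 2, yv k 0, yv k 1, zv k 0, zv k 1} with hI
  set φ := Ideal.Quotient.mk I with hφ
  rw [← Ideal.Quotient.eq_zero_iff_mem]
  have hx : (Polynomial.X : Polynomial (MvPolynomial (Fin 3 × ℕ) k ⧸ I)) ^ 3 ∣
      (serUpTo k (xv k) m).map φ := by
    rw [Polynomial.X_pow_dvd_iff]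
    intro d hd
    rw [Polynomial.coeff_map, serUpTo_coeff k _ m d (by omega)]
    rw [hφ, Ideal.Quotient.eq_zero_iff_mem]
    apply Ideal.subset_span
    interval_cases d <;> simp
  have hy : (Polynomial.X : Polynomial (MvPolynomial (Fin 3 × ℕ) k ⧸ I)) ^ 2 ∣
      (serUpTo k (yv k) m).map φ := by
    rw [Polynomial.X_pow_dvd_iff]
    intro d hd
    rw [Polynomial.coeff_map, serUpTo_coeff k _ m d (by omega)]
    rw [hφ, Ideal.Quotient.eq_zero_iff_mem]
    apply Ideal.subset_span
    interval_cases d <;> simp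
  have hz : (Polynomial.X : Polynomial (MvPolynomial (Fin 3 × ℕ) k ⧸ I)) ^ 2 ∣
      (serUpTo k (zv k) m).map φ := by
    rw [Polynomial.X_pow_dvd_iff]
    intro d hd
    rw [Polynomial.coeff_map, serUpTo_coeff k _ m d (by omega)]
    rw [hφ, Ideal.Quotient.eq_zero_iff_mem]
    apply Ideal.subset_span
    interval_cases d <;> simp
  set px := (serUpTo k (xv k) m).map φ
  set py := (serUpTo k (yv k) m).map φ
  set pz := (serUpTo k (zv k) m).map φ
  have h1 : (Polynomial.X : Polynomial (MvPolynomial (Fin 3 × ℕ) k ⧸ I)) ^ 6 ∣ px ^ 2 := by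
    have : (Polynomial.X : Polynomial (MvPolynomial (Fin 3 × ℕ) k ⧸ I)) ^ 6
        = (Polynomial.X ^ 3) ^ 2 := by ring
    rw [this]; exact pow_dvd_pow_of_dvd (α := Polynomial (MvPolynomial (Fin 3 × ℕ) k ⧸ I)) hx 2
  have h2 : (Polynomial.X : Polynomial (MvPolynomial (Fin 3 × ℕ) k ⧸ I)) ^ 6 ∣ py ^ 2 * pz := by
    have : (Polynomial.X : Polynomial (MvPolynomial (Fin 3 × ℕ) k ⧸ I)) ^ 6
        = (Polynomial.X ^ 2) ^ 2 * Polynomial.X ^ 2 := by ring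
    rw [this]; exact mul_dvd_mul (α := Polynomial (MvPolynomial (Fin 3 × ℕ) k ⧸ I)) (pow_dvd_pow_of_dvd (α := Polynomial (MvPolynomial (Fin 3 × ℕ) k ⧸ I)) hy 2) hz
  have h3 : (Polynomial.X : Polynomial (MvPolynomial (Fin 3 × ℕ) k ⧸ I)) ^ 6 ∣ py * pz ^ 2 := by
    have : (Polynomial.X : Polynomial (MvPolynomial (Fin 3 × ℕ) k ⧸ I)) ^ 6
        = Polynomial.X ^ 2 * (Polynomial.X ^ 2) ^ 2 := by ring
    rw [this]; exact mul_dvd_mul (α := Polynomial (MvPolynomial (Fin 3 × ℕ) k ⧸ I)) hy (pow_dvd_pow_of_dvd (α := Polynomial (MvPolynomial (Fin 3 × ℕ) k ⧸ I)) hz 2)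
  have hsum : (Polynomial.X : Polynomial (MvPolynomial (Fin 3 × ℕ) k ⧸ I)) ^ 6 ∣
      px ^ 2 + py ^ 2 * pz + py * pz ^ 2 := dvd_add (dvd_add h1 h2) h3
  rw [Polynomial.X_pow_dvd_iff] at hsum
  have := hsum j (by omega)
  unfold fCoeff
  rw [← Polynomial.coeff_map]
  simpa [px, py, pz, Polynomial.map_add, Polynomial.map_mul, Polynomial.map_pow] using this
end
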